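/- A multivariate polynomial with rational coefficients taking integer values on all integer tuples takes p-adic integer values on all tuples of p-adic integers. -/
import Mathlib

theorem int_valued_mv_polynomial_padic_int_valued
    (p : ℕ) [Fact p.Prime] (m : ℕ) (f : MvPolynomial (Fin m) ℚ)
    (hf : ∀ a : Fin m → ℤ, ∃ z : ℤ,
      MvPolynomial.eval (fun i => (a i : ℚ)) f = (z : ℚ)) :
    ∀ a : Fin m → ℤ_[p],
      ‖MvPolynomial.eval (fun i => (a i : ℚ_[p]))
        (MvPolynomial.map (algebraMap ℚ ℚ_[p]) f)‖ ≤ 1 := by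
  -- the map ℤ^m → ℤ_[p]^m has dense range
  have hdense : DenseRange (fun (a : Fin m → ℤ) (i : Fin m) => ((a i : ℤ_[p]))) := by
    have h : Set.range (fun (a : Fin m → ℤ) (i : Fin m) => ((a i : ℤ_[p])))
        = Set.pi Set.univ (fun _ => Set.range (Int.cast : ℤ → ℤ_[p])) := by
      ext x
      constructor
      · rintro ⟨a, rfl⟩ i _
        exact ⟨a i, rfl⟩
      · intro hx
        choose a ha using fun i => hx i (Set.mem_univ i)
        exact ⟨a, funext ha⟩
    rw [DenseRange, h]
    exact dense_pi Set.univ (fun i _ => PadicInt.denseRange_intCast)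
  set g : (Fin m → ℤ_[p]) → ℚ_[p] := fun a =>
    MvPolynomial.eval (fun i => (a i : ℚ_[p])) (MvPolynomial.map (algebraMap ℚ ℚ_[p]) f)
  have hcoe : Continuous (fun x : ℤ_[p] => (x : ℚ_[p])) :=
    (Isometry.of_dist_eq (f := fun x : ℤ_[p] => (x : ℚ_[p])) fun x y => rfl).continuous
  have hcont : Continuous g :=
    (MvPolynomial.continuous_eval _).comp
      (continuous_pi fun i => hcoe.comp (continuous_apply i))
  have hclosed : IsClosed {a : Fin m → ℤ_[p] | ‖g a‖ ≤ 1} :=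
    isClosed_le (continuous_norm.comp hcont) continuous_const
  intro a
  refine hdense.induction_on a hclosed ?_
  intro b
  show ‖g (fun i => (b i : ℤ_[p]))‖ ≤ 1
  obtain ⟨z, hz⟩ := hf b
  have : g (fun i => (b i : ℤ_[p])) = (z : ℚ_[p]) := by
    simp only [g, MvPolynomial.eval_map]
    have h2 : MvPolynomial.eval₂ (algebraMap ℚ ℚ_[p])
          (fun i => (((b i : ℤ_[p]) : ℚ_[p]))) f
        = algebraMap ℚ ℚ_[p] (MvPolynomial.eval (fun i => ((b i : ℤ) : ℚ)) f) := by
      show _ = algebraMap ℚ ℚ_[p]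
          (MvPolynomial.eval₂ (RingHom.id ℚ) (fun i => ((b i : ℤ) : ℚ)) f)
      rw [MvPolynomial.eval₂_comp_left (algebraMap ℚ ℚ_[p]), RingHom.comp_id]
      have h3 : (⇑(algebraMap ℚ ℚ_[p]) ∘ fun i => ((b i : ℤ) : ℚ))
          = fun i => (((b i : ℤ_[p]) : ℚ_[p])) := by
        funext i; simp [Function.comp]
      rw [h3]
    rw [h2, hz]
    simp
  rw [this]
  simpa using Padic.norm_int_le_one (p := p) z
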